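/- Let $m$ be an even positive integer and let $n \ge 1$. Define $T(n)$ to be the set of pairs $(x,y)$ with $1 \le x < y \le m$, $x + y \equiv n \pmod{m+1}$, and $x + y \le n$. Then $|T(n)| \ge \min\{n/2, m/2\} - 1$. -/

import Mathlib

private lemma Tn_aux (m n s lo hi : ℕ) (hmod : s % (m + 1) = n % (m + 1))
    (hsn : s ≤ n) (hlo : 1 ≤ lo) (hhi : 2 * hi < s) (hsm : s ≤ lo + m) :
    (Finset.Icc lo hi).card ≤
      (((Finset.Icc 1 m ×ˢ Finset.Icc 1 m).filter
        (fun p : ℕ × ℕ =>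
          p.1 < p.2 ∧ (p.1 + p.2) % (m + 1) = n % (m + 1) ∧ p.1 + p.2 ≤ n)).filter
        (fun p => p.1 + p.2 = s)).card := by
  apply Finset.card_le_card_of_injOn (fun x => (x, s - x))
  · intro x hx
    simp only [Finset.mem_coe, Finset.mem_Icc] at hx
    have hxs : x + (s - x) = s := by omega
    simp only [Finset.mem_coe, Finset.mem_filter, Finset.mem_product, Finset.mem_Icc]
    refine ⟨⟨⟨⟨by omega, by omega⟩, by omega, by omega⟩, by omega, ?_, ?_⟩, hxs⟩
    · rw [hxs]; exact hmod
    · rw [hxs]; exact hsn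
  · intro a _ b _ h
    simpa using congrArg Prod.fst h

/-- For even `m` and `n ≥ 1`, the set `T(n)` of pairs `(x, y)` with `1 ≤ x < y ≤ m`,
`x + y ≡ n (mod m+1)` and `x + y ≤ n` has size at least `min (n/2) (m/2) - 1`. -/
theorem Tn_lower_bound (m n : ℕ) (hm : 0 < m) (hmeven : Even m) (hn : 1 ≤ n) :
    min ((n : ℚ) / 2) ((m : ℚ) / 2) - 1 ≤
      ((Finset.Icc 1 m ×ˢ Finset.Icc 1 m).filter
        (fun p : ℕ × ℕ =>
          p.1 < p.2 ∧ (p.1 + p.2) % (m + 1) = n % (m + 1) ∧ p.1 + p.2 ≤ n)).card := by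
  set S := ((Finset.Icc 1 m ×ˢ Finset.Icc 1 m).filter
        (fun p : ℕ × ℕ =>
          p.1 < p.2 ∧ (p.1 + p.2) % (m + 1) = n % (m + 1) ∧ p.1 + p.2 ≤ n)) with hS
  by_cases hnm : n ≤ m
  · -- min is n/2; use sum s = n
    have h1 : (Finset.Icc 1 ((n - 1) / 2)).card ≤ (S.filter (fun p => p.1 + p.2 = n)).card := by
      apply Tn_aux m n n 1 ((n - 1) / 2) rfl le_rfl le_rfl (by omega) (by omega)
    have h2 : (S.filter (fun p => p.1 + p.2 = n)).card ≤ S.card :=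
      Finset.card_le_card (Finset.filter_subset _ _)
    have h3 : (Finset.Icc 1 ((n - 1) / 2)).card = (n - 1) / 2 := by
      rw [Nat.card_Icc]; omega
    have hc : n ≤ 2 * S.card + 2 := by omega
    have hmin : min ((n : ℚ) / 2) ((m : ℚ) / 2) ≤ (n : ℚ) / 2 := min_le_left _ _
    have : (n : ℚ) ≤ 2 * S.card + 2 := by exact_mod_cast hc
    linarith
  · -- n > m; min is m/2
    push_neg at hnm
    set r := n % (m + 1) with hr
    have hrm : r < m + 1 := Nat.mod_lt _ (by omega)
    have hrr : r % (m + 1) = r := Nat.mod_eq_of_lt hrm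
    have hdm := Nat.div_add_mod n (m + 1)
    have hq : 1 ≤ n / (m + 1) := (Nat.one_le_div_iff (by omega)).mpr (by omega)
    have hq2 : m + 1 ≤ (m + 1) * (n / (m + 1)) := Nat.le_mul_of_pos_right _ hq
    have hs2n : r + (m + 1) ≤ n := by
      rw [hr]; omega
    have hs2mod : (r + (m + 1)) % (m + 1) = n % (m + 1) := by
      rw [Nat.add_mod_right, hrr]
    have h2 : (Finset.Icc (r + 1) ((r + m) / 2)).card ≤
        (S.filter (fun p => p.1 + p.2 = r + (m + 1))).card := by
      apply Tn_aux m n (r + (m + 1)) (r + 1) ((r + m) / 2) hs2mod hs2n (by omega)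
        (by omega) (by omega)
    have h2c : (Finset.Icc (r + 1) ((r + m) / 2)).card = (r + m) / 2 + 1 - (r + 1) := by
      rw [Nat.card_Icc]
    have hmin : min ((n : ℚ) / 2) ((m : ℚ) / 2) ≤ (m : ℚ) / 2 := min_le_right _ _
    by_cases hr0 : r = 0
    · have h3 : (S.filter (fun p => p.1 + p.2 = r + (m + 1))).card ≤ S.card :=
        Finset.card_le_card (Finset.filter_subset _ _)
      have hc : m ≤ 2 * S.card + 2 := by omega
      have : (m : ℚ) ≤ 2 * S.card + 2 := by exact_mod_cast hc
      linarith
    · have h1 : (Finset.Icc 1 ((r - 1) / 2)).card ≤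
          (S.filter (fun p => p.1 + p.2 = r)).card := by
        apply Tn_aux m n r 1 ((r - 1) / 2) hrr (by omega) le_rfl (by omega) (by omega)
      have h1c : (Finset.Icc 1 ((r - 1) / 2)).card = (r - 1) / 2 := by
        rw [Nat.card_Icc]; omega
      have hdisj : Disjoint (S.filter (fun p => p.1 + p.2 = r))
          (S.filter (fun p => p.1 + p.2 = r + (m + 1))) := by
        rw [Finset.disjoint_left]
        intro p hp1 hp2
        simp only [Finset.mem_filter] at hp1 hp2
        omega
      have hsub : (S.filter (fun p => p.1 + p.2 = r)) ∪
          (S.filter (fun p => p.1 + p.2 = r + (m + 1))) ⊆ S := by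
        apply Finset.union_subset <;> exact Finset.filter_subset _ _
      have hcard : (S.filter (fun p => p.1 + p.2 = r)).card +
          (S.filter (fun p => p.1 + p.2 = r + (m + 1))).card ≤ S.card := by
        rw [← Finset.card_union_of_disjoint hdisj]
        exact Finset.card_le_card hsub
      obtain ⟨k, hk⟩ := hmeven
      have hc : m ≤ 2 * S.card + 2 := by omega
      have : (m : ℚ) ≤ 2 * S.card + 2 := by exact_mod_cast hc
      linarith
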